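/- For the minimum counterexample 𝒢, with r = |O|, x = χ(𝒢) − r and k = n − r, the integer k is not divisible by x. -/

import Mathlib

open SimpleGraph
open scoped Classical

instance : Fact ((0:ℝ) < 1) := ⟨one_pos⟩

/-- An arc on the unit circle `AddCircle 1`, described by its left endpoint (the first
endpoint met anticlockwise from an interior point) and its (clockwise) length.
Since `0 < len < 1`, an arc is neither a single point nor the whole circle. -/
structure CArc where
  left : AddCircle (1:ℝ)
  len : ℝ
  len_pos : 0 < len
  len_lt_one : len < 1

namespace CArc

/-- The set of points of the arc: going clockwise from the left endpoint for `len`. -/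
def pts (a : CArc) : Set (AddCircle (1:ℝ)) :=
  {q | ∃ t : ℝ, 0 ≤ t ∧ t ≤ a.len ∧ q = a.left + (t : AddCircle (1:ℝ))}

/-- The right endpoint of an arc. -/
noncomputable def right (a : CArc) : AddCircle (1:ℝ) := a.left + ((a.len : ℝ) : AddCircle (1:ℝ))

end CArc

/-- A family of arcs on the circle: a finite set of arcs with all endpoints distinct. -/
structure ArcFamily where
  arcs : Finset CArc
  endpoints_distinct :
    ∀ a ∈ arcs, ∀ b ∈ arcs, a ≠ b →
      a.left ≠ b.left ∧ a.left ≠ b.right ∧ a.right ≠ b.left ∧ a.right ≠ b.right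

namespace ArcFamily

/-- A family of arcs is proper if no arc is properly contained in another. -/
def IsProper (F : ArcFamily) : Prop :=
  ∀ a ∈ F.arcs, ∀ b ∈ F.arcs, ¬ a.pts ⊂ b.pts

/-- The overlap set of a point `p`: all arcs of the family containing `p`. -/
noncomputable def overlap (F : ArcFamily) (p : AddCircle (1:ℝ)) : Finset CArc :=
  F.arcs.filter fun a => p ∈ a.pts

/-- `r_sup`: the maximum cardinality of an overlap set. -/
noncomputable def rsup (F : ArcFamily) : ℕ :=
  sSup {n | ∃ p, (F.overlap p).card = n}

/-- `r_inf`: the minimum cardinality of an overlap set. -/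
noncomputable def rinf (F : ArcFamily) : ℕ :=
  sInf {n | ∃ p, (F.overlap p).card = n}

/-- The circular arc graph of a family: vertices are the arcs, two distinct arcs are
adjacent iff they intersect. -/
def graph (F : ArcFamily) : SimpleGraph {a : CArc // a ∈ F.arcs} where
  Adj u v := u ≠ v ∧ (u.1.pts ∩ v.1.pts).Nonempty
  symm := ⟨by rintro u v ⟨h, q, h1, h2⟩; exact ⟨h.symm, q, h2, h1⟩⟩
  loopless := ⟨by rintro u ⟨h, -⟩; exact h rfl⟩

/-- `F.CwAdj u v` : the arc `v` is clockwise adjacent to the arc `u`,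
i.e. `v ≠ u` and `v ∈ O(r(u))`. -/
def CwAdj (F : ArcFamily) (u v : CArc) : Prop :=
  v ≠ u ∧ v ∈ F.overlap u.right

/-- `F.AcwAdj u v` : the arc `v` is anticlockwise adjacent to the arc `u`,
i.e. `v ≠ u` and `v ∈ O(l(u))`. -/
def AcwAdj (F : ArcFamily) (u v : CArc) : Prop :=
  v ≠ u ∧ v ∈ F.overlap u.left

end ArcFamily

/-- `G` has a complete minor on `m` vertices: there are `m` pairwise disjoint connected
branch sets with an edge of `G` between any two of them. -/
def HasKMinor {V : Type*} (G : SimpleGraph V) (m : ℕ) : Prop :=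
  ∃ B : Fin m → Set V,
    (∀ i, (G.induce (B i)).Connected) ∧
    (Pairwise fun i j => Disjoint (B i) (B j)) ∧
    (Pairwise fun i j => ∃ u ∈ B i, ∃ v ∈ B j, G.Adj u v)

/-- A graph is a proper circular arc graph if it is isomorphic to the circular arc graph
of some proper family of arcs. -/
def IsProperCircularArcGraph {V : Type*} (G : SimpleGraph V) : Prop :=
  ∃ F : ArcFamily, F.IsProper ∧ Nonempty (G ≃g F.graph)

/-- The clockwise angular distance from `p` to `q`: the unique `t ∈ [0,1)`
with `q = p + t`.  Points are "encountered" in clockwise order of this quantity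
when traversing clockwise from `p`. -/
noncomputable def angFrom (p q : AddCircle (1:ℝ)) : ℝ :=
  ((AddCircle.equivIco (1:ℝ) 0) (q - p) : ℝ)

/-- A minimum counterexample to Hadwiger's conjecture among proper circular arc graphs:
a proper family of arcs whose circular arc graph `𝒢` has no complete minor on `χ(𝒢)`
vertices, while every proper circular arc graph on fewer vertices than `𝒢` has a
complete minor on its own chromatic number of vertices. -/
structure MinCounterexample where
  F : ArcFamily
  proper : F.IsProper
  no_clique_minor : ∀ m : ℕ, F.graph.chromaticNumber = m → ¬ HasKMinor F.graph m
  minimal : ∀ (V : Type) [inst : Fintype V] (G : SimpleGraph V),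
    IsProperCircularArcGraph G → Fintype.card V < F.arcs.card →
    ∀ m : ℕ, G.chromaticNumber = m → HasKMinor G m

/-- A minimum counterexample `𝒢` to Hadwiger's conjecture among proper circular arc
graphs, together with a fixed maximum overlap set `O = O(p₀)` of cardinality `r`,
the quantities `x = χ(𝒢) − r` and `k = n − r`, and the labeling `q 1, …, q r`
(the arcs of `O`) and `a 1, …, a k` (the remaining arcs) of the arcs of the
representation in the clockwise order, starting from `p₀`, in which their right
endpoints are encountered. -/
structure LabeledMinCounterexample extends MinCounterexample where
  p₀ : AddCircle (1:ℝ)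
  r : ℕ
  x : ℕ
  k : ℕ
  q : ℕ → CArc
  a : ℕ → CArc
  hr : (F.overlap p₀).card = r
  hmax : r = F.rsup
  hx : F.graph.chromaticNumber = ((r + x : ℕ) : ℕ∞)
  hk : F.arcs.card = r + k
  q_mem : ∀ i, 1 ≤ i → i ≤ r → q i ∈ F.overlap p₀
  a_mem : ∀ j, 1 ≤ j → j ≤ k → a j ∈ F.arcs ∧ a j ∉ F.overlap p₀
  q_inj : ∀ i i', 1 ≤ i → i ≤ r → 1 ≤ i' → i' ≤ r → q i = q i' → i = i'
  a_inj : ∀ j j', 1 ≤ j → j ≤ k → 1 ≤ j' → j' ≤ k → a j = a j' → j = j'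
  q_order : ∀ i i', 1 ≤ i → i < i' → i' ≤ r →
    angFrom p₀ (q i).right < angFrom p₀ (q i').right
  a_order : ∀ j j', 1 ≤ j → j < j' → j' ≤ k →
    angFrom p₀ (a j).right < angFrom p₀ (a j').right
  qa_order : ∀ i j, 1 ≤ i → i ≤ r → 1 ≤ j → j ≤ k →
    angFrom p₀ (q i).right < angFrom p₀ (a j).right

section Geo

lemma coe_eq_zero_int (n : ℤ) : (((n:ℝ)) : AddCircle (1:ℝ)) = 0 := by
  rw [AddCircle.coe_eq_zero_iff]
  exact ⟨n, by simp⟩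

lemma angFrom_add_coe (b : AddCircle (1:ℝ)) (t : ℝ) :
    angFrom b (b + (t : AddCircle (1:ℝ))) = Int.fract t := by
  have h : (b + (t : AddCircle (1:ℝ))) - b = ((t:ℝ) : AddCircle (1:ℝ)) := by abel
  rw [angFrom, h]
  have := AddCircle.coe_equivIco_mk_apply (p := (1:ℝ)) (hp := ⟨one_pos⟩) t
  simpa using this

lemma exists_coe (b z : AddCircle (1:ℝ)) : ∃ t : ℝ, z = b + (t : AddCircle (1:ℝ)) := by
  obtain ⟨t, ht⟩ := QuotientAddGroup.mk_surjective (z - b)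
  exact ⟨t, by rw [show ((t:ℝ) : AddCircle (1:ℝ)) = QuotientAddGroup.mk t from rfl, ht]; abel⟩

lemma angFrom_mem (b z : AddCircle (1:ℝ)) : angFrom b z ∈ Set.Ico (0:ℝ) 1 := by
  have := ((AddCircle.equivIco (1:ℝ) 0) (z - b)).2
  simpa [angFrom] using this

lemma angFrom_nonneg (b z : AddCircle (1:ℝ)) : 0 ≤ angFrom b z := (angFrom_mem b z).1
lemma angFrom_lt_one (b z : AddCircle (1:ℝ)) : angFrom b z < 1 := (angFrom_mem b z).2

lemma coe_fract (t : ℝ) : ((Int.fract t : ℝ) : AddCircle (1:ℝ)) = ((t:ℝ) : AddCircle (1:ℝ)) := by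
  have : ((Int.fract t : ℝ) : AddCircle (1:ℝ))
      = QuotientAddGroup.mk (t - ((⌊t⌋:ℤ):ℝ)) := rfl
  rw [this, QuotientAddGroup.mk_sub]
  rw [show (QuotientAddGroup.mk (((⌊t⌋:ℤ):ℝ)) : AddCircle (1:ℝ)) = ((((⌊t⌋:ℤ):ℝ)) : AddCircle (1:ℝ)) from rfl]
  rw [coe_eq_zero_int]
  simp

lemma coe_angFrom (b z : AddCircle (1:ℝ)) : b + ((angFrom b z : ℝ) : AddCircle (1:ℝ)) = z := by
  obtain ⟨t, rfl⟩ := exists_coe b z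
  rw [angFrom_add_coe, coe_fract]

lemma angFrom_self (b : AddCircle (1:ℝ)) : angFrom b b = 0 := by
  have := angFrom_add_coe b 0
  simpa using this

lemma angFrom_inj {b z w : AddCircle (1:ℝ)} (h : angFrom b z = angFrom b w) : z = w := by
  rw [← coe_angFrom b z, ← coe_angFrom b w, h]

lemma angFrom_coe_of_mem (b : AddCircle (1:ℝ)) {t : ℝ} (h0 : 0 ≤ t) (h1 : t < 1) :
    angFrom b (b + (t : AddCircle (1:ℝ))) = t := by
  rw [angFrom_add_coe, Int.fract_eq_self.2 ⟨h0, h1⟩]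

lemma coe_sub' (a b : ℝ) : ((a - b : ℝ) : AddCircle (1:ℝ)) = ((a:ℝ) : AddCircle (1:ℝ)) - ((b:ℝ) : AddCircle (1:ℝ)) := by
  have : ((a - b : ℝ) : AddCircle (1:ℝ)) = QuotientAddGroup.mk (a - b) := rfl
  rw [this, QuotientAddGroup.mk_sub]

lemma coe_add' (a b : ℝ) : ((a + b : ℝ) : AddCircle (1:ℝ)) = ((a:ℝ) : AddCircle (1:ℝ)) + ((b:ℝ) : AddCircle (1:ℝ)) := by
  have : ((a + b : ℝ) : AddCircle (1:ℝ)) = QuotientAddGroup.mk (a + b) := rfl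
  rw [this, QuotientAddGroup.mk_add]

lemma angFrom_base (p₀ b z : AddCircle (1:ℝ)) :
    angFrom b z = Int.fract (angFrom p₀ z - angFrom p₀ b) := by
  have hz : b + ((angFrom p₀ z - angFrom p₀ b : ℝ) : AddCircle (1:ℝ)) = z := by
    rw [coe_sub']
    have h1 := coe_angFrom p₀ b
    have h2 := coe_angFrom p₀ z
    calc b + (((angFrom p₀ z : ℝ) : AddCircle (1:ℝ)) - ((angFrom p₀ b : ℝ) : AddCircle (1:ℝ)))
        = (p₀ + ((angFrom p₀ b : ℝ) : AddCircle (1:ℝ)))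
          + (((angFrom p₀ z : ℝ) : AddCircle (1:ℝ)) - ((angFrom p₀ b : ℝ) : AddCircle (1:ℝ))) := by rw [h1]
      _ = p₀ + ((angFrom p₀ z : ℝ) : AddCircle (1:ℝ)) := by abel
      _ = z := h2
  conv_lhs => rw [← hz]
  rw [angFrom_add_coe]

lemma fract_sub_cases {y z : ℝ} (hy : 0 ≤ y) (hy1 : y < 1) (hz : 0 ≤ z) (hz1 : z < 1) :
    (z ≤ y ∧ Int.fract (y - z) = y - z) ∨ (y < z ∧ Int.fract (y - z) = y - z + 1) := by
  rcases le_or_gt z y with h | h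
  · exact Or.inl ⟨h, Int.fract_eq_self.2 ⟨by linarith, by linarith⟩⟩
  · refine Or.inr ⟨h, ?_⟩
    have h2 := Int.fract_add_intCast (y - z) 1
    push_cast at h2
    rw [← h2, Int.fract_eq_self.2 ⟨by linarith, by linarith⟩]

lemma mem_pts_iff (u : CArc) (p : AddCircle (1:ℝ)) :
    p ∈ u.pts ↔ angFrom u.left p ≤ u.len := by
  constructor
  · rintro ⟨t, ht0, htl, rfl⟩
    rw [angFrom_coe_of_mem _ ht0 (lt_of_le_of_lt htl u.len_lt_one)]
    exact htl
  · intro h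
    exact ⟨angFrom u.left p, angFrom_nonneg _ _, h, (coe_angFrom _ _).symm⟩

end Geo

section ArcCoord

variable (p₀ : AddCircle (1:ℝ))

noncomputable def aL (u : CArc) : ℝ := angFrom p₀ u.left
noncomputable def aR (u : CArc) : ℝ := angFrom p₀ u.right

lemma aL_mem (u : CArc) : aL p₀ u ∈ Set.Ico (0:ℝ) 1 := angFrom_mem _ _
lemma aR_mem (u : CArc) : aR p₀ u ∈ Set.Ico (0:ℝ) 1 := angFrom_mem _ _

lemma coe_right (u : CArc) :
    p₀ + ((aL p₀ u + u.len : ℝ) : AddCircle (1:ℝ)) = u.right := by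
  simp only [aL]
  rw [coe_add', ← add_assoc, coe_angFrom p₀ u.left]
  rfl

/-- angle of p₀ as seen from u.left -/
lemma angFrom_left_p₀ (u : CArc) :
    angFrom u.left p₀ = (if aL p₀ u = 0 then 0 else 1 - aL p₀ u) := by
  simp only [aL]
  rw [angFrom_base p₀ u.left p₀, angFrom_self]
  rcases fract_sub_cases (le_refl (0:ℝ)) one_pos (angFrom_nonneg p₀ u.left) (angFrom_lt_one p₀ u.left)
    with ⟨h1, h2⟩ | ⟨h1, h2⟩
  · have h0 : angFrom p₀ u.left = 0 := le_antisymm h1 (angFrom_nonneg _ _)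
    rw [h2]; simp [h0]
  · rw [h2]; simp only [h1.ne', ↓reduceIte]
    ring

lemma typeA_facts {u : CArc} (h : p₀ ∉ u.pts) :
    0 < aL p₀ u ∧ aL p₀ u + u.len < 1 ∧ aR p₀ u = aL p₀ u + u.len := by
  rw [mem_pts_iff, not_le, angFrom_left_p₀] at h
  have hL0 : ¬ (aL p₀ u = 0) := by
    intro h0
    rw [if_pos h0] at h
    exact absurd h (not_lt.2 (le_of_lt u.len_pos))
  rw [if_neg hL0] at h
  have hLpos : 0 < aL p₀ u := lt_of_le_of_ne (aL_mem p₀ u).1 (Ne.symm hL0)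
  have hsum : aL p₀ u + u.len < 1 := by linarith
  refine ⟨hLpos, hsum, ?_⟩
  rw [show aR p₀ u = angFrom p₀ u.right from rfl, ← coe_right p₀ u]
  exact angFrom_coe_of_mem p₀ (by have := u.len_pos; have := (aL_mem p₀ u).1; linarith) hsum

lemma typeA_mem {u : CArc} (h : p₀ ∉ u.pts) (p : AddCircle (1:ℝ)) :
    p ∈ u.pts ↔ aL p₀ u ≤ angFrom p₀ p ∧ angFrom p₀ p ≤ aR p₀ u := by
  obtain ⟨hL, hsum, hR⟩ := typeA_facts p₀ h
  rw [mem_pts_iff, hR, show angFrom u.left p = Int.fract (angFrom p₀ p - aL p₀ u) from angFrom_base p₀ u.left p]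
  have hφ0 : 0 ≤ angFrom p₀ p := angFrom_nonneg _ _
  have hφ1 : angFrom p₀ p < 1 := angFrom_lt_one _ _
  rcases fract_sub_cases hφ0 hφ1 (aL_mem p₀ u).1 (aL_mem p₀ u).2 with ⟨h1, h2⟩ | ⟨h1, h2⟩
  · rw [h2]
    constructor
    · intro hle; exact ⟨h1, by linarith⟩
    · intro hh; linarith [hh.2]
  · rw [h2]
    constructor
    · intro hle; exfalso; linarith
    · intro hh; exfalso; linarith [hh.1]

lemma typeQ_facts {u : CArc} (h : p₀ ∈ u.pts) :
    (aL p₀ u = 0 ∧ aR p₀ u = u.len) ∨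
    (0 < aL p₀ u ∧ 1 ≤ aL p₀ u + u.len ∧ aR p₀ u = aL p₀ u + u.len - 1 ∧ aR p₀ u < aL p₀ u) := by
  rw [mem_pts_iff, angFrom_left_p₀] at h
  by_cases hL0 : aL p₀ u = 0
  · left
    refine ⟨hL0, ?_⟩
    rw [show aR p₀ u = angFrom p₀ u.right from rfl, ← coe_right p₀ u, hL0, zero_add]
    exact angFrom_coe_of_mem p₀ (le_of_lt u.len_pos) u.len_lt_one
  · right
    rw [if_neg hL0] at h
    have hLpos : 0 < aL p₀ u := lt_of_le_of_ne (aL_mem p₀ u).1 (Ne.symm hL0)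
    have hsum : 1 ≤ aL p₀ u + u.len := by linarith
    have hReq : aR p₀ u = aL p₀ u + u.len - 1 := by
      rw [show aR p₀ u = angFrom p₀ u.right from rfl, ← coe_right p₀ u]
      rw [show ((aL p₀ u + u.len : ℝ) : AddCircle (1:ℝ))
          = ((aL p₀ u + u.len - 1 : ℝ) : AddCircle (1:ℝ)) + (((1:ℝ)) : AddCircle (1:ℝ)) by
        rw [← coe_add']; norm_num]
      rw [show (((1:ℝ)) : AddCircle (1:ℝ)) = 0 by exact_mod_cast coe_eq_zero_int 1, add_zero]
      exact angFrom_coe_of_mem p₀ (by linarith) (by have := u.len_lt_one; have := (aL_mem p₀ u).2; linarith)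
    exact ⟨hLpos, hsum, hReq, by rw [hReq]; have := u.len_lt_one; linarith⟩

lemma typeQ_mem {u : CArc} (h : p₀ ∈ u.pts) (p : AddCircle (1:ℝ)) :
    p ∈ u.pts ↔ angFrom p₀ p ≤ aR p₀ u ∨ (aR p₀ u < aL p₀ u ∧ aL p₀ u ≤ angFrom p₀ p) := by
  rw [mem_pts_iff, show angFrom u.left p = Int.fract (angFrom p₀ p - aL p₀ u) from angFrom_base p₀ u.left p]
  have hφ0 : 0 ≤ angFrom p₀ p := angFrom_nonneg _ _
  have hφ1 : angFrom p₀ p < 1 := angFrom_lt_one _ _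
  rcases typeQ_facts p₀ h with ⟨hL0, hR⟩ | ⟨hLpos, hsum, hReq, hwrap⟩
  · rw [hL0, hR]
    rcases fract_sub_cases hφ0 hφ1 (le_refl (0:ℝ)) one_pos with ⟨_, h2⟩ | ⟨h1, _⟩
    · rw [h2, sub_zero]
      constructor
      · intro hle; exact Or.inl hle
      · rintro (hle | ⟨hlt, _⟩)
        · exact hle
        · exfalso; linarith [u.len_pos]
    · exfalso; linarith
  · rcases fract_sub_cases hφ0 hφ1 (aL_mem p₀ u).1 (aL_mem p₀ u).2 with ⟨h1, h2⟩ | ⟨h1, h2⟩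
    · rw [h2]
      constructor
      · intro _; exact Or.inr ⟨hwrap, h1⟩
      · intro _; linarith
    · rw [h2]
      constructor
      · intro hle; left; rw [hReq]; linarith
      · rintro (hle | ⟨_, hge⟩)
        · rw [hReq] at hle; linarith
        · exfalso; linarith

lemma left_mem_pts (u : CArc) : u.left ∈ u.pts :=
  ⟨0, le_refl _, le_of_lt u.len_pos, by simp⟩

lemma right_mem_pts (u : CArc) : u.right ∈ u.pts :=
  ⟨u.len, le_of_lt u.len_pos, le_refl _, rfl⟩

lemma aL_eq_angFrom_left (u : CArc) : aL p₀ u = angFrom p₀ u.left := rfl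
lemma aR_eq_angFrom_right (u : CArc) : aR p₀ u = angFrom p₀ u.right := rfl

end ArcCoord
section Proper

variable (p₀ : AddCircle (1:ℝ))

lemma sortA {F : ArcFamily} (hF : F.IsProper) {u v : CArc} (hu : u ∈ F.arcs) (hv : v ∈ F.arcs)
    (huv : u ≠ v) (hup : p₀ ∉ u.pts) (hvp : p₀ ∉ v.pts) (hR : aR p₀ u ≤ aR p₀ v) :
    aL p₀ u < aL p₀ v := by
  by_contra hle
  push_neg at hle
  rcases eq_or_lt_of_le hle with heq | hlt
  · have : v.left = u.left := angFrom_inj (by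
      rw [← aL_eq_angFrom_left, ← aL_eq_angFrom_left, heq])
    exact (F.endpoints_distinct u hu v hv huv).1 (by rw [this])
  · have hsub : u.pts ⊆ v.pts := by
      intro p hp
      rw [typeA_mem p₀ hup] at hp
      rw [typeA_mem p₀ hvp]
      exact ⟨le_trans (le_of_lt hlt) hp.1, le_trans hp.2 hR⟩
    have hmem : v.left ∈ v.pts := left_mem_pts v
    have hnmem : v.left ∉ u.pts := by
      rw [typeA_mem p₀ hup]
      rintro ⟨h1, -⟩
      rw [← aL_eq_angFrom_left] at h1
      linarith
    exact hF u hu v hv ((Set.ssubset_iff_of_subset hsub).2 ⟨v.left, hmem, hnmem⟩)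

lemma sep_aq {F : ArcFamily} (hF : F.IsProper) {a q : CArc} (ha : a ∈ F.arcs) (hq : q ∈ F.arcs)
    (hap : p₀ ∉ a.pts) (hqp : p₀ ∈ q.pts) :
    aR p₀ q < aR p₀ a ∧ (aR p₀ q < aL p₀ q → aL p₀ a < aL p₀ q) := by
  have hsub : (aR p₀ a ≤ aR p₀ q ∨ (aR p₀ q < aL p₀ q ∧ aL p₀ q ≤ aL p₀ a)) → a.pts ⊆ q.pts := by
    intro hc p hp
    rw [typeA_mem p₀ hap] at hp
    rw [typeQ_mem p₀ hqp]
    rcases hc with h | ⟨hw, hL⟩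
    · exact Or.inl (le_trans hp.2 h)
    · exact Or.inr ⟨hw, le_trans hL hp.1⟩
  have hne : ¬ (a.pts ⊆ q.pts) := by
    intro hs
    exact hF a ha q hq ((Set.ssubset_iff_of_subset hs).2 ⟨p₀, hqp, hap⟩)
  constructor
  · by_contra hR
    push_neg at hR
    exact hne (hsub (Or.inl hR))
  · intro hw
    by_contra hL
    push_neg at hL
    exact hne (hsub (Or.inr ⟨hw, hL⟩))

end Proper

section GraphHelpers

lemma connected_pred_singleton {V : Type*} (G : SimpleGraph V) (S : Set V) (w : V)
    (hS : ∀ v, v ∈ S ↔ v = w) : (G.induce S).Connected := by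
  haveI : Nonempty S := ⟨⟨w, (hS w).2 rfl⟩⟩
  refine ⟨fun a b => ?_⟩
  have : a = b := Subtype.ext (((hS a.1).1 a.2).trans (((hS b.1).1 b.2).symm))
  rw [this]

lemma connected_chain {V : Type*} (G : SimpleGraph V) (S : Set V) (t : ℕ) (ht : 0 < t)
    (w : ℕ → V) (hS : ∀ v, v ∈ S ↔ ∃ s, s < t ∧ v = w s)
    (hadj : ∀ s, s + 1 < t → G.Adj (w s) (w (s+1))) : (G.induce S).Connected := by
  have hmem : ∀ s, s < t → w s ∈ S := fun s hs => (hS _).2 ⟨s, hs, rfl⟩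
  haveI : Nonempty S := ⟨⟨w 0, hmem 0 ht⟩⟩
  have key : ∀ s (hs : s < t), (G.induce S).Reachable ⟨w 0, hmem 0 ht⟩ ⟨w s, hmem s hs⟩ := by
    intro s
    induction s with
    | zero => intro _; rfl
    | succ n ih =>
      intro hs
      have h1 : n < t := by omega
      refine (ih h1).trans ?_
      have hadj' : (G.induce S).Adj ⟨w n, hmem n h1⟩ ⟨w (n+1), hmem _ hs⟩ := hadj n hs
      exact hadj'.reachable
  refine ⟨fun a b => ?_⟩
  obtain ⟨sa, hsa, ha⟩ := (hS a.1).1 a.2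
  obtain ⟨sb, hsb, hb⟩ := (hS b.1).1 b.2
  have ha' : a = ⟨w sa, hmem _ hsa⟩ := Subtype.ext ha
  have hb' : b = ⟨w sb, hmem _ hsb⟩ := Subtype.ext hb
  rw [ha', hb']
  exact (key sa hsa).symm.trans (key sb hsb)

noncomputable def eraseFam (F : ArcFamily) (u : CArc) : ArcFamily where
  arcs := F.arcs.erase u
  endpoints_distinct := fun a ha b hb hab =>
    F.endpoints_distinct a (Finset.mem_of_mem_erase ha) b (Finset.mem_of_mem_erase hb) hab

lemma eraseFam_proper {F : ArcFamily} (hF : F.IsProper) (u : CArc) : (eraseFam F u).IsProper :=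
  fun a ha b hb => hF a (Finset.mem_of_mem_erase ha) b (Finset.mem_of_mem_erase hb)

noncomputable def eraseEmb (F : ArcFamily) (u : CArc) : (eraseFam F u).graph ↪g F.graph := by
  refine ⟨⟨fun v => ⟨v.1, Finset.mem_of_mem_erase v.2⟩, fun a b h => by
    apply Subtype.ext
    have h2 := congrArg Subtype.val h
    simpa using h2⟩, ?_⟩
  intro a b
  show (_ ≠ _ ∧ _) ↔ (_ ≠ _ ∧ _)
  constructor
  · rintro ⟨h1, h2⟩
    exact ⟨fun hh => h1 (by rw [hh]), h2⟩
  · rintro ⟨h1, h2⟩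
    refine ⟨fun hh => h1 ?_, h2⟩
    apply Subtype.ext
    have h3 := congrArg Subtype.val hh
    simpa using h3

lemma HasKMinor.of_embedding {V V' : Type*} {G : SimpleGraph V} {G' : SimpleGraph V'}
    (f : G ↪g G') {m : ℕ} (h : HasKMinor G m) : HasKMinor G' m := by
  obtain ⟨B, hconn, hdisj, hedge⟩ := h
  refine ⟨fun i => f '' B i, fun i => ?_, ?_, ?_⟩
  · have e : (G.induce (B i)) ≃g (G'.induce (f '' B i)) := by
      refine ⟨Equiv.Set.image f (B i) f.injective, ?_⟩
      intro a b
      exact f.map_rel_iff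
    exact (SimpleGraph.Iso.connected_iff e).1 (hconn i)
  · intro i j hij
    rw [Set.disjoint_left]
    rintro x ⟨a, ha, rfl⟩ ⟨b, hb, hba⟩
    have hba' : b = a := f.injective hba
    exact Set.disjoint_left.1 (hdisj hij) ha (hba' ▸ hb)
  · intro i j hij
    obtain ⟨u, hu, v, hv, huv⟩ := hedge hij
    exact ⟨f u, ⟨u, hu, rfl⟩, f v, ⟨v, hv, rfl⟩, f.map_rel_iff.2 huv⟩

end GraphHelpers

section Helpers

lemma ArcFamily.mem_overlap {F : ArcFamily} {p : AddCircle (1:ℝ)} {a : CArc} :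
    a ∈ F.overlap p ↔ a ∈ F.arcs ∧ p ∈ a.pts := Finset.mem_filter

/-- A graph containing an `m`-clique (given by an injective map with pairwise
adjacent images) has a complete minor on `m` vertices: take singleton branch sets. -/
lemma hasKMinor_of_clique {V : Type*} (G : SimpleGraph V) (m : ℕ) (f : Fin m → V)
    (hinj : Function.Injective f) (hadj : ∀ i j : Fin m, i ≠ j → G.Adj (f i) (f j)) :
    HasKMinor G m := by
  refine ⟨fun i => {f i}, fun i => ?_, ?_, ?_⟩
  · haveI : Nonempty ↥({f i} : Set V) := ⟨⟨f i, rfl⟩⟩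
    refine ⟨fun a b => ?_⟩
    have hab : a = b := Subtype.ext
      ((Set.mem_singleton_iff.mp a.2).trans (Set.mem_singleton_iff.mp b.2).symm)
    exact hab ▸ SimpleGraph.Reachable.refl a
  · intro i j hij
    exact Set.disjoint_singleton.2 fun h => hij (hinj h)
  · intro i j hij
    exact ⟨f i, rfl, f j, rfl, hadj i j hij⟩

/-- A non-complete finite graph is colorable with `card V - 1` colors. -/
lemma colorable_card_sub_one_of_not_complete {V : Type*} [Fintype V] (G : SimpleGraph V)
    {u v : V} (huv : u ≠ v) (hnadj : ¬ G.Adj u v) :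
    G.Colorable (Fintype.card V - 1) := by
  classical
  have C : G.Coloring {w : V // w ≠ v} := by
    refine SimpleGraph.Coloring.mk
      (fun w => if h : w = v then ⟨u, huv⟩ else ⟨w, h⟩) ?_
    intro a b hab hfab
    by_cases ha : a = v
    · by_cases hb : b = v
      · exact G.loopless.irrefl v (by rwa [ha, hb] at hab)
      · rw [dif_pos ha, dif_neg hb] at hfab
        have hub : u = b := congrArg Subtype.val hfab
        rw [← hub] at hab
        exact hnadj (G.symm.symm _ _ (ha ▸ hab))
    · by_cases hb : b = v
      · rw [dif_neg ha, dif_pos hb] at hfab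
        have hau : a = u := congrArg Subtype.val hfab
        rw [hau] at hab
        exact hnadj (hb ▸ hab)
      · rw [dif_neg ha, dif_neg hb] at hfab
        exact G.ne_of_adj hab (congrArg Subtype.val hfab)
  have hcard : Fintype.card {w : V // w ≠ v} = Fintype.card V - 1 := by
    have h := Fintype.card_subtype_compl (fun w : V => w = v)
    simpa [Fintype.card_subtype_eq] using h
  simpa [hcard] using C.colorable

end Helpers

/-- For the labeled minimum counterexample, `k` is not divisible by `x`. -/
theorem k_not_divisible_by_x (C : LabeledMinCounterexample) : ¬ (C.x ∣ C.k) := by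
  rintro ⟨t, ht⟩
  -- the vertex set of `G` has cardinality `n = r + k`
  have hcard : Fintype.card {a : CArc // a ∈ C.F.arcs} = C.r + C.k := by
    rw [Fintype.card_coe]; exact C.hk
  -- `χ ≤ n`
  have hchi_le : (((C.r + C.x : ℕ)) : ℕ∞) ≤ ((C.r + C.k : ℕ) : ℕ∞) := by
    have h1 := (C.F.graph.colorable_of_fintype).chromaticNumber_le
    rw [hcard] at h1
    rw [← C.hx]; exact h1
  have hrx_le : C.r + C.x ≤ C.r + C.k := by exact_mod_cast hchi_le
  have hx_le_k : C.x ≤ C.k := by omega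
  -- the arcs of the maximum overlap set form an `r`-clique
  have hq_mem : ∀ i : Fin C.r, C.q (i.1+1) ∈ C.F.arcs := by
    intro i
    exact (ArcFamily.mem_overlap.1 (C.q_mem (i.1+1) (by omega) (by omega))).1
  have hq_inj : ∀ i j : Fin C.r, C.q (i.1+1) = C.q (j.1+1) → i = j := by
    intro i j h
    have hi := i.2; have hj := j.2
    have := C.q_inj (i.1+1) (j.1+1) (by omega) (by omega) (by omega) (by omega) h
    exact Fin.ext (by omega)
  have hq_adj : ∀ i j : Fin C.r, i ≠ j →
      C.F.graph.Adj ⟨C.q (i.1+1), hq_mem i⟩ ⟨C.q (j.1+1), hq_mem j⟩ := by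
    intro i j hij
    have hqi := ArcFamily.mem_overlap.1 (C.q_mem (i.1+1) (by omega) (by omega))
    have hqj := ArcFamily.mem_overlap.1 (C.q_mem (j.1+1) (by omega) (by omega))
    have hne : C.q (i.1+1) ≠ C.q (j.1+1) := fun h => hij (hq_inj i j h)
    exact ⟨by simpa [Subtype.ext_iff] using hne, C.p₀, hqi.2, hqj.2⟩
  by_cases hx0 : C.x = 0
  · -- if `x = 0` then the `r`-clique is a `K_χ` minor
    have hminor : HasKMinor C.F.graph (C.r + C.x) := by
      rw [hx0, Nat.add_zero]
      refine hasKMinor_of_clique _ C.r (fun i => ⟨C.q (i.1+1), hq_mem i⟩) ?_ hq_adj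
      intro i j h
      exact hq_inj i j (by simpa [Subtype.ext_iff] using h)
    exact C.no_clique_minor (C.r + C.x) C.hx hminor
  -- now `x ≥ 1`
  have hx1 : 1 ≤ C.x := Nat.one_le_iff_ne_zero.2 hx0
  by_cases ht0 : t = 0
  · -- `k = 0` contradicts `χ ≤ n`
    rw [ht0, Nat.mul_zero] at ht
    omega
  have ht1 : 1 ≤ t := Nat.one_le_iff_ne_zero.2 ht0
  by_cases ht1' : t = 1
  · -- `k = x`, so `χ = n`; then `G` is complete (else `χ ≤ n - 1`), and the
    -- whole vertex set is a clique giving a `K_χ` minor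
    rw [ht1', Nat.mul_one] at ht
    have hcomplete : ∀ u v : {a : CArc // a ∈ C.F.arcs}, u ≠ v → C.F.graph.Adj u v := by
      by_contra h
      push_neg at h
      obtain ⟨u, v, huv, hnadj⟩ := h
      have hcol := colorable_card_sub_one_of_not_complete C.F.graph huv hnadj
      have hle := hcol.chromaticNumber_le
      rw [hcard, C.hx] at hle
      have : C.r + C.x ≤ C.r + C.k - 1 := by exact_mod_cast hle
      omega
    have hminor : HasKMinor C.F.graph (C.r + C.x) := by
      have hcards : Fintype.card {a : CArc // a ∈ C.F.arcs} = C.r + C.x := by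
        rw [hcard, ht]
      refine hasKMinor_of_clique _ (C.r + C.x)
        (fun i => (Fintype.equivFinOfCardEq hcards).symm i) ?_ ?_
      · exact (Fintype.equivFinOfCardEq hcards).symm.injective
      · intro i j hij
        exact hcomplete _ _ (fun h => hij ((Fintype.equivFinOfCardEq hcards).symm.injective h))
    exact C.no_clique_minor (C.r + C.x) C.hx hminor
  -- hard case: `x ≥ 1`, `t ≥ 2`
  -- ===== hard case: x ≥ 1, t ≥ 2 =====
  have ht2 : 2 ≤ t := by omega
  have hbl : ∀ u : CArc, angFrom C.p₀ u.left = aL C.p₀ u := fun u => rfl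
  have hbr : ∀ u : CArc, angFrom C.p₀ u.right = aR C.p₀ u := fun u => rfl
  have hk2x : C.x + C.x ≤ C.k := by
    have h9 : C.x * 2 ≤ C.x * t := Nat.mul_le_mul_left _ ht2
    have h10 : C.x * 2 = C.x + C.x := by ring
    omega
  have hkx1 : C.x + (t - 1) * C.x = C.k := by
    have e1 : (t - 1 + 1) * C.x = (t - 1) * C.x + C.x := by ring
    have e2 : t - 1 + 1 = t := by omega
    have e3 : C.k = t * C.x := by rw [ht, Nat.mul_comm]
    rw [e2] at e1
    omega
  have haA : ∀ j, 1 ≤ j → j ≤ C.k → C.a j ∈ C.F.arcs ∧ C.p₀ ∉ (C.a j).pts := by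
    intro j h1 h2
    obtain ⟨hmem, hnot⟩ := C.a_mem j h1 h2
    exact ⟨hmem, fun hp => hnot (ArcFamily.mem_overlap.2 ⟨hmem, hp⟩)⟩
  have hqQ : ∀ m, 1 ≤ m → m ≤ C.r → C.q m ∈ C.F.arcs ∧ C.p₀ ∈ (C.q m).pts := by
    intro m h1 h2
    exact ArcFamily.mem_overlap.1 (C.q_mem m h1 h2)
  have hRmono : ∀ j j', 1 ≤ j → j < j' → j' ≤ C.k → aR C.p₀ (C.a j) < aR C.p₀ (C.a j') :=
    fun j j' h1 h2 h3 => C.a_order j j' h1 h2 h3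
  have hRmono_le : ∀ j j', 1 ≤ j → j ≤ j' → j' ≤ C.k →
      aR C.p₀ (C.a j) ≤ aR C.p₀ (C.a j') := by
    intro j j' h1 h2 h3
    rcases eq_or_lt_of_le h2 with rfl | h
    · exact le_refl _
    · exact le_of_lt (hRmono _ _ h1 h h3)
  have hRrev : ∀ j j', 1 ≤ j → j ≤ C.k → 1 ≤ j' → j' ≤ C.k →
      aR C.p₀ (C.a j) ≤ aR C.p₀ (C.a j') → j ≤ j' := by
    intro j j' h1 h2 h3 h4 h5
    by_contra hlt
    push_neg at hlt
    exact absurd h5 (not_le.2 (hRmono j' j h3 hlt h2))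
  have hLmono_le : ∀ j j', 1 ≤ j → j ≤ j' → j' ≤ C.k →
      aL C.p₀ (C.a j) ≤ aL C.p₀ (C.a j') := by
    intro j j' h1 h2 h3
    rcases eq_or_lt_of_le h2 with rfl | h
    · exact le_refl _
    · refine le_of_lt (sortA C.p₀ C.proper (haA j h1 (by omega)).1 (haA j' (by omega) h3).1
        ?_ (haA j h1 (by omega)).2 (haA j' (by omega) h3).2 (le_of_lt (hRmono _ _ h1 h h3)))
      intro heq
      have := C.a_inj j j' h1 (by omega) (by omega) h3 heq
      omega
  have hsep : ∀ j m, 1 ≤ j → j ≤ C.k → 1 ≤ m → m ≤ C.r →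
      aR C.p₀ (C.q m) < aR C.p₀ (C.a j) ∧
      (aR C.p₀ (C.q m) < aL C.p₀ (C.q m) → aL C.p₀ (C.a j) < aL C.p₀ (C.q m)) := by
    intro j m h1 h2 h3 h4
    exact sep_aq C.p₀ C.proper (haA j h1 h2).1 (hqQ m h3 h4).1 (haA j h1 h2).2 (hqQ m h3 h4).2
  have hOb : ∀ p, (C.F.overlap p).card ≤ C.r := by
    intro p
    rw [C.hmax]
    refine le_csSup ⟨C.F.arcs.card, ?_⟩ ⟨p, rfl⟩
    rintro n ⟨p', rfl⟩
    exact Finset.card_filter_le _ _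
  have henumA : ∀ w, w ∈ C.F.arcs → w ∉ C.F.overlap C.p₀ →
      ∃ j, 1 ≤ j ∧ j ≤ C.k ∧ C.a j = w := by
    intro w hw hnw
    have himg : (Finset.Icc 1 C.k).image C.a = C.F.arcs \ C.F.overlap C.p₀ := by
      apply Finset.eq_of_subset_of_card_le
      · intro y hy
        obtain ⟨j, hj, rfl⟩ := Finset.mem_image.1 hy
        rw [Finset.mem_Icc] at hj
        obtain ⟨h1, h2⟩ := C.a_mem j hj.1 hj.2
        exact Finset.mem_sdiff.2 ⟨h1, h2⟩
      · have hsub : C.F.overlap C.p₀ ⊆ C.F.arcs := Finset.filter_subset _ _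
        have h1 : (C.F.arcs \ C.F.overlap C.p₀).card = C.k := by
          rw [Finset.card_sdiff_of_subset hsub, C.hr, C.hk]
          omega
        have h2 : ((Finset.Icc 1 C.k).image C.a).card = C.k := by
          rw [Finset.card_image_of_injOn, Nat.card_Icc]
          · omega
          · intro j1 hj1 j2 hj2 he
            rw [Finset.mem_coe, Finset.mem_Icc] at hj1 hj2
            exact C.a_inj _ _ hj1.1 hj1.2 hj2.1 hj2.2 he
        omega
    have hmem : w ∈ (Finset.Icc 1 C.k).image C.a := by
      rw [himg]
      exact Finset.mem_sdiff.2 ⟨hw, hnw⟩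
    obtain ⟨j, hj, he⟩ := Finset.mem_image.1 hmem
    rw [Finset.mem_Icc] at hj
    exact ⟨j, hj.1, hj.2, he⟩
  have henumQ : ∀ w, w ∈ C.F.overlap C.p₀ → ∃ m, 1 ≤ m ∧ m ≤ C.r ∧ C.q m = w := by
    intro w hw
    have himg : (Finset.Icc 1 C.r).image C.q = C.F.overlap C.p₀ := by
      apply Finset.eq_of_subset_of_card_le
      · intro y hy
        obtain ⟨m, hm, rfl⟩ := Finset.mem_image.1 hy
        rw [Finset.mem_Icc] at hm
        exact C.q_mem m hm.1 hm.2
      · have h2 : ((Finset.Icc 1 C.r).image C.q).card = C.r := by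
          rw [Finset.card_image_of_injOn, Nat.card_Icc]
          · omega
          · intro j1 hj1 j2 hj2 he
            rw [Finset.mem_coe, Finset.mem_Icc] at hj1 hj2
            exact C.q_inj _ _ hj1.1 hj1.2 hj2.1 hj2.2 he
        rw [C.hr, h2]
    have hmem : w ∈ (Finset.Icc 1 C.r).image C.q := by rw [himg]; exact hw
    obtain ⟨m, hm, he⟩ := Finset.mem_image.1 hmem
    rw [Finset.mem_Icc] at hm
    exact ⟨m, hm.1, hm.2, he⟩
  -- ===== minimum degree via criticality =====
  have hdeg : ∀ u, u ∈ C.F.arcs →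
      C.r + C.x ≤ (C.F.arcs.filter (fun w => w ≠ u ∧ (w.pts ∩ u.pts).Nonempty)).card + 1 := by
    intro u hu
    by_contra hlt
    push_neg at hlt
    have hproper' := eraseFam_proper C.proper u
    have hcard' : Fintype.card {w : CArc // w ∈ (eraseFam C.F u).arcs} = C.r + C.k - 1 := by
      rw [Fintype.card_coe]
      show (C.F.arcs.erase u).card = _
      rw [Finset.card_erase_of_mem hu, C.hk]
    have hBcol := (eraseFam C.F u).graph.colorable_of_fintype
    have hne : (eraseFam C.F u).graph.chromaticNumber ≠ ⊤ :=
      SimpleGraph.chromaticNumber_ne_top_iff_exists.2 ⟨_, hBcol⟩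
    set m := (eraseFam C.F u).graph.chromaticNumber.toNat with hmdef
    have hm : (m : ℕ∞) = (eraseFam C.F u).graph.chromaticNumber := ENat.coe_toNat hne
    have hmle : m ≤ C.r + C.x := by
      have h1 := SimpleGraph.chromaticNumber_mono_of_hom (eraseEmb C.F u).toHom
      rw [← hm, C.hx] at h1
      exact_mod_cast h1
    rcases eq_or_lt_of_le hmle with heq | hlt2
    · have hsmall : Fintype.card {w : CArc // w ∈ (eraseFam C.F u).arcs} < C.F.arcs.card := by
        rw [hcard', C.hk]
        omega
      have hKm := C.minimal {w : CArc // w ∈ (eraseFam C.F u).arcs} (eraseFam C.F u).graph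
        ⟨eraseFam C.F u, hproper', ⟨SimpleGraph.Iso.refl⟩⟩ hsmall m hm.symm
      have hKm2 := HasKMinor.of_embedding (eraseEmb C.F u) hKm
      rw [heq] at hKm2
      exact C.no_clique_minor _ C.hx hKm2
    · have hcol' : (eraseFam C.F u).graph.Colorable (C.r + C.x - 1) := by
        have h2 : (eraseFam C.F u).graph.Colorable m :=
          SimpleGraph.chromaticNumber_le_iff_colorable.1 (le_of_eq hm.symm)
        exact h2.mono (by omega)
      obtain ⟨Cg⟩ := hcol'
      have hmemerase : ∀ w, w ∈ C.F.arcs.filter (fun w => w ≠ u ∧ (w.pts ∩ u.pts).Nonempty) →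
          w ∈ (eraseFam C.F u).arcs := by
        intro w hw
        rw [Finset.mem_filter] at hw
        exact Finset.mem_erase.2 ⟨hw.2.1, hw.1⟩
      set NU := C.F.arcs.filter (fun w => w ≠ u ∧ (w.pts ∩ u.pts).Nonempty) with hNU
      have hexc : ∃ c : Fin (C.r + C.x - 1), c ∉ NU.attach.image
          (fun w => Cg ⟨w.1, hmemerase w.1 w.2⟩) := by
        by_contra hall
        push_neg at hall
        have huniv : (Finset.univ : Finset (Fin (C.r + C.x - 1))) ⊆
            NU.attach.image (fun w => Cg ⟨w.1, hmemerase w.1 w.2⟩) := fun c _ => hall c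
        have h3 := Finset.card_le_card huniv
        rw [Finset.card_univ, Fintype.card_fin] at h3
        have h4 := Finset.card_image_le (s := NU.attach)
          (f := fun w => Cg ⟨w.1, hmemerase w.1 w.2⟩)
        rw [Finset.card_attach] at h4
        omega
      obtain ⟨c, hc⟩ := hexc
      have CF : C.F.graph.Coloring (Fin (C.r + C.x - 1)) := by
        refine SimpleGraph.Coloring.mk
          (fun v => if h : v.1 = u then c else Cg ⟨v.1, Finset.mem_erase.2 ⟨h, v.2⟩⟩) ?_
        intro v w hadj heq2
        obtain ⟨hne2, hpts⟩ := hadj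
        have hvw : v.1 ≠ w.1 := fun hh => hne2 (Subtype.ext hh)
        by_cases hv : v.1 = u <;> by_cases hw : w.1 = u
        · exact hvw (hv.trans hw.symm)
        · rw [dif_pos hv, dif_neg hw] at heq2
          have hwN : w.1 ∈ NU := by
            rw [hNU, Finset.mem_filter]
            refine ⟨w.2, hw, ?_⟩
            obtain ⟨pp, hp1, hp2⟩ := hpts
            exact ⟨pp, hp2, hv ▸ hp1⟩
          apply hc
          rw [Finset.mem_image]
          exact ⟨⟨w.1, hwN⟩, Finset.mem_attach _ _, heq2.symm⟩
        · rw [dif_neg hv, dif_pos hw] at heq2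
          have hvN : v.1 ∈ NU := by
            rw [hNU, Finset.mem_filter]
            refine ⟨v.2, hv, ?_⟩
            obtain ⟨pp, hp1, hp2⟩ := hpts
            exact ⟨pp, hp1, hw ▸ hp2⟩
          apply hc
          rw [Finset.mem_image]
          exact ⟨⟨v.1, hvN⟩, Finset.mem_attach _ _, heq2⟩
        · rw [dif_neg hv, dif_neg hw] at heq2
          have hadj' : (eraseFam C.F u).graph.Adj ⟨v.1, Finset.mem_erase.2 ⟨hv, v.2⟩⟩
              ⟨w.1, Finset.mem_erase.2 ⟨hw, w.2⟩⟩ := by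
            refine ⟨?_, hpts⟩
            intro hh
            apply hvw
            have h9 := congrArg Subtype.val hh
            simpa using h9
          exact Cg.valid hadj' heq2
      have hcolF : C.F.graph.Colorable (C.r + C.x - 1) := ⟨CF⟩
      have h5 := hcolF.chromaticNumber_le
      rw [C.hx] at h5
      have h6 : C.r + C.x ≤ C.r + C.x - 1 := by exact_mod_cast h5
      omega
  -- ===== coverage of right endpoints =====
  have hOright : ∀ j, 1 ≤ j → j ≤ C.k → C.x + 1 ≤ (C.F.overlap (C.a j).right).card := by
    intro j h1 h2
    obtain ⟨hmem, hnot⟩ := haA j h1 h2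
    have hdegj := hdeg (C.a j) hmem
    have hsub : C.F.arcs.filter (fun w => w ≠ C.a j ∧ (w.pts ∩ (C.a j).pts).Nonempty)
        ⊆ (C.F.overlap (C.a j).left ∪ C.F.overlap (C.a j).right).erase (C.a j) := by
      intro w hw
      rw [Finset.mem_filter] at hw
      obtain ⟨hwF, hwne, pp, hp1, hp2⟩ := hw
      refine Finset.mem_erase.2 ⟨hwne, ?_⟩
      rw [typeA_mem C.p₀ hnot] at hp2
      by_cases hwq : C.p₀ ∈ w.pts
      · rw [typeQ_mem C.p₀ hwq] at hp1
        rcases hp1 with hA | ⟨hwrap, hB⟩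
        · refine Finset.mem_union_left _ (ArcFamily.mem_overlap.2 ⟨hwF, ?_⟩)
          rw [typeQ_mem C.p₀ hwq, hbl]
          left
          linarith [hp2.1]
        · refine Finset.mem_union_right _ (ArcFamily.mem_overlap.2 ⟨hwF, ?_⟩)
          rw [typeQ_mem C.p₀ hwq, hbr]
          right
          exact ⟨hwrap, by linarith [hp2.2]⟩
      · obtain ⟨j', hj1, hj2, rfl⟩ := henumA w hwF
          (fun hov => hwq (ArcFamily.mem_overlap.1 hov).2)
        rw [typeA_mem C.p₀ (haA j' hj1 hj2).2] at hp1
        rcases le_or_gt (aR C.p₀ (C.a j)) (aR C.p₀ (C.a j')) with hcmp | hcmp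
        · refine Finset.mem_union_right _ (ArcFamily.mem_overlap.2 ⟨hwF, ?_⟩)
          rw [typeA_mem C.p₀ (haA j' hj1 hj2).2, hbr]
          exact ⟨by linarith [hp1.1, hp2.2], hcmp⟩
        · have hj'le : j' ≤ j := by
            by_contra hgt
            push_neg at hgt
            exact absurd (hRmono j j' h1 hgt hj2) (not_lt.2 (le_of_lt hcmp))
          refine Finset.mem_union_left _ (ArcFamily.mem_overlap.2 ⟨hwF, ?_⟩)
          rw [typeA_mem C.p₀ (haA j' hj1 hj2).2, hbl]
          exact ⟨hLmono_le j' j hj1 hj'le h2, by linarith [hp2.1, hp1.2]⟩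
    have hcard1 := Finset.card_le_card hsub
    have hmemL : C.a j ∈ C.F.overlap (C.a j).left :=
      ArcFamily.mem_overlap.2 ⟨hmem, left_mem_pts _⟩
    have hmemR : C.a j ∈ C.F.overlap (C.a j).right :=
      ArcFamily.mem_overlap.2 ⟨hmem, right_mem_pts _⟩
    have hcard2 := Finset.card_erase_of_mem
      (Finset.mem_union_left (C.F.overlap (C.a j).right) hmemL)
    have hcard3 := Finset.card_union_add_card_inter
      (C.F.overlap (C.a j).left) (C.F.overlap (C.a j).right)
    have hcard4 : 1 ≤ (C.F.overlap (C.a j).left ∩ C.F.overlap (C.a j).right).card :=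
      Finset.card_pos.2 ⟨C.a j, Finset.mem_inter.2 ⟨hmemL, hmemR⟩⟩
    have hcard5 : 1 ≤ (C.F.overlap (C.a j).left ∪ C.F.overlap (C.a j).right).card :=
      Finset.card_pos.2 ⟨C.a j, Finset.mem_union_left _ hmemL⟩
    have hObL := hOb (C.a j).left
    omega
  -- ===== x ≤ #head-neighbors + #tail-neighbors of each q =====
  have hHF : ∀ m, 1 ≤ m → m ≤ C.r →
      C.x ≤ ((Finset.Icc 1 C.k).filter (fun j => (C.a j).left ∈ (C.q m).pts)).card
          + ((Finset.Icc 1 C.k).filter (fun j => (C.a j).right ∈ (C.q m).pts)).card := by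
    intro m h1 h2
    obtain ⟨hqF, hqp⟩ := hqQ m h1 h2
    have hdegm := hdeg (C.q m) hqF
    have hsub : C.F.arcs.filter (fun w => w ≠ C.q m ∧ (w.pts ∩ (C.q m).pts).Nonempty)
        ⊆ ((C.F.overlap C.p₀).erase (C.q m)) ∪
          (((Finset.Icc 1 C.k).filter (fun j => (C.a j).left ∈ (C.q m).pts)) ∪
           ((Finset.Icc 1 C.k).filter (fun j => (C.a j).right ∈ (C.q m).pts))).image C.a := by
      intro w hw
      rw [Finset.mem_filter] at hw
      obtain ⟨hwF, hwne, pp, hp1, hp2⟩ := hw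
      by_cases hwq : C.p₀ ∈ w.pts
      · exact Finset.mem_union_left _
          (Finset.mem_erase.2 ⟨hwne, ArcFamily.mem_overlap.2 ⟨hwF, hwq⟩⟩)
      · obtain ⟨j', hj1, hj2, rfl⟩ := henumA w hwF
          (fun hov => hwq (ArcFamily.mem_overlap.1 hov).2)
        rw [typeA_mem C.p₀ (haA j' hj1 hj2).2] at hp1
        rw [typeQ_mem C.p₀ hqp] at hp2
        refine Finset.mem_union_right _ (Finset.mem_image.2 ⟨j', ?_, rfl⟩)
        rcases hp2 with hA | ⟨hwrap, hB⟩
        · refine Finset.mem_union_left _ (Finset.mem_filter.2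
            ⟨Finset.mem_Icc.2 ⟨hj1, hj2⟩, ?_⟩)
          rw [typeQ_mem C.p₀ hqp, hbl]
          left
          linarith [hp1.1]
        · refine Finset.mem_union_right _ (Finset.mem_filter.2
            ⟨Finset.mem_Icc.2 ⟨hj1, hj2⟩, ?_⟩)
          rw [typeQ_mem C.p₀ hqp, hbr]
          right
          exact ⟨hwrap, by linarith [hp1.2]⟩
    have hcard1 := Finset.card_le_card hsub
    have hcard2 := Finset.card_union_le ((C.F.overlap C.p₀).erase (C.q m))
      ((((Finset.Icc 1 C.k).filter (fun j => (C.a j).left ∈ (C.q m).pts)) ∪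
        ((Finset.Icc 1 C.k).filter (fun j => (C.a j).right ∈ (C.q m).pts))).image C.a)
    have hcard3 : ((C.F.overlap C.p₀).erase (C.q m)).card = C.r - 1 := by
      rw [Finset.card_erase_of_mem (C.q_mem m h1 h2), C.hr]
    have hcard4 := Finset.card_image_le
      (s := ((Finset.Icc 1 C.k).filter (fun j => (C.a j).left ∈ (C.q m).pts)) ∪
            ((Finset.Icc 1 C.k).filter (fun j => (C.a j).right ∈ (C.q m).pts))) (f := C.a)
    have hcard5 := Finset.card_union_le
      ((Finset.Icc 1 C.k).filter (fun j => (C.a j).left ∈ (C.q m).pts))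
      ((Finset.Icc 1 C.k).filter (fun j => (C.a j).right ∈ (C.q m).pts))
    have hrge1 : 1 ≤ C.r := by
      have := Finset.card_pos.2 ⟨C.q m, C.q_mem m h1 h2⟩
      omega
    omega
  -- ===== closure properties =====
  have hHdown : ∀ m, 1 ≤ m → m ≤ C.r → ∀ j j', 1 ≤ j' → j' ≤ j → j ≤ C.k →
      (C.a j).left ∈ (C.q m).pts → (C.a j').left ∈ (C.q m).pts := by
    intro m hm1 hm2 j j' h1 h2 h3 hmem
    rw [typeQ_mem C.p₀ (hqQ m hm1 hm2).2, hbl] at hmem ⊢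
    rcases hmem with hA | ⟨hwrap, hB⟩
    · left
      have := hLmono_le j' j h1 h2 h3
      linarith
    · exfalso
      have hs := (hsep j m (by omega) h3 hm1 hm2).2 hwrap
      linarith
  have hFup : ∀ m, 1 ≤ m → m ≤ C.r → ∀ j j', 1 ≤ j → j ≤ j' → j' ≤ C.k →
      (C.a j).right ∈ (C.q m).pts → (C.a j').right ∈ (C.q m).pts := by
    intro m hm1 hm2 j j' h1 h2 h3 hmem
    rw [typeQ_mem C.p₀ (hqQ m hm1 hm2).2, hbr] at hmem ⊢
    rcases hmem with hA | ⟨hwrap, hB⟩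
    · exfalso
      have hs := (hsep j m h1 (by omega) hm1 hm2).1
      linarith
    · right
      have := hRmono_le j j' h1 h2 h3
      exact ⟨hwrap, by linarith⟩
  have hTpoint : ∀ m j j', 1 ≤ m → m ≤ C.r → 1 ≤ j → j ≤ j' → j' ≤ C.k →
      (C.a j).right ∈ (C.q m).pts → (C.q m).left ∈ (C.a j').pts := by
    intro m j j' hm1 hm2 h1 h2 h3 hmem
    rw [typeQ_mem C.p₀ (hqQ m hm1 hm2).2, hbr] at hmem
    rcases hmem with hA | ⟨hwrap, hB⟩
    · exfalso
      have hs := (hsep j m h1 (by omega) hm1 hm2).1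
      linarith
    · rw [typeA_mem C.p₀ (haA j' (by omega) h3).2, hbl]
      have hs2 := (hsep j' m (by omega) h3 hm1 hm2).2 hwrap
      have hs3 := hRmono_le j j' h1 h2 h3
      exact ⟨le_of_lt hs2, by linarith⟩
  -- ===== the chain-crossing lemma =====
  have hcross : ∀ j j', 1 ≤ j → j < j' → j' ≤ j + C.x → j + C.x ≤ C.k →
      ((C.a j).pts ∩ (C.a j').pts).Nonempty := by
    intro j j' h1 h2 h3 h4
    by_cases hP : ∃ m, 1 ≤ m ∧ m ≤ C.r ∧ (C.a j).right ∈ (C.q m).pts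
    · obtain ⟨m, hm1, hm2, hmem⟩ := hP
      exact ⟨(C.q m).left, hTpoint m j j hm1 hm2 h1 (le_refl j) (by omega) hmem,
        hTpoint m j j' hm1 hm2 h1 (le_of_lt h2) (by omega) hmem⟩
    · push_neg at hP
      have hxp1 := hOright j h1 (by omega)
      have hsubS : C.F.overlap (C.a j).right ⊆
          ((Finset.Icc 1 C.k).filter (fun i => (C.a j).right ∈ (C.a i).pts)).image C.a := by
        intro w hw
        obtain ⟨hwF, hwmem⟩ := ArcFamily.mem_overlap.1 hw
        by_cases hwq : C.p₀ ∈ w.pts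
        · obtain ⟨m, hm1, hm2, rfl⟩ := henumQ w (ArcFamily.mem_overlap.2 ⟨hwF, hwq⟩)
          exact absurd hwmem (hP m hm1 hm2)
        · obtain ⟨i, hi1, hi2, rfl⟩ := henumA w hwF
            (fun hov => hwq (ArcFamily.mem_overlap.1 hov).2)
          exact Finset.mem_image.2 ⟨i, Finset.mem_filter.2
            ⟨Finset.mem_Icc.2 ⟨hi1, hi2⟩, hwmem⟩, rfl⟩
      have hcardS : C.x + 1 ≤
          ((Finset.Icc 1 C.k).filter (fun i => (C.a j).right ∈ (C.a i).pts)).card := by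
        have h5 := Finset.card_le_card hsubS
        have h6 := Finset.card_image_le
          (s := (Finset.Icc 1 C.k).filter (fun i => (C.a j).right ∈ (C.a i).pts)) (f := C.a)
        omega
      have hbig : ∃ i, (i ∈ (Finset.Icc 1 C.k).filter
          (fun i => (C.a j).right ∈ (C.a i).pts)) ∧ j + C.x ≤ i := by
        by_contra hnone
        push_neg at hnone
        have hsub2 : (Finset.Icc 1 C.k).filter (fun i => (C.a j).right ∈ (C.a i).pts)
            ⊆ Finset.Icc j (j + C.x - 1) := by
          intro i hi
          obtain ⟨hiI, hmem2⟩ := Finset.mem_filter.1 hi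
          rw [Finset.mem_Icc] at hiI
          rw [Finset.mem_Icc]
          have hge : j ≤ i := by
            rw [typeA_mem C.p₀ (haA i hiI.1 hiI.2).2, hbr] at hmem2
            exact hRrev j i h1 (by omega) hiI.1 hiI.2 hmem2.2
          have hlt3 := hnone i (Finset.mem_filter.2 ⟨Finset.mem_Icc.2 hiI, hmem2⟩)
          exact ⟨hge, by omega⟩
        have h7 := Finset.card_le_card hsub2
        rw [Nat.card_Icc] at h7
        omega
      obtain ⟨i, hiS, hige⟩ := hbig
      obtain ⟨hiIcc, himem⟩ := Finset.mem_filter.1 hiS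
      rw [Finset.mem_Icc] at hiIcc
      refine ⟨(C.a j).right, right_mem_pts _, ?_⟩
      rw [typeA_mem C.p₀ (haA j' (by omega) (by omega)).2, hbr]
      rw [typeA_mem C.p₀ (haA i hiIcc.1 hiIcc.2).2, hbr] at himem
      constructor
      · have h8 := hLmono_le j' i (by omega) (by omega) hiIcc.2
        linarith [himem.1]
      · exact hRmono_le j j' h1 (le_of_lt h2) (by omega)
  -- ===== every q attaches to every chain =====
  have hqchain : ∀ m i, 1 ≤ m → m ≤ C.r → 1 ≤ i → i ≤ C.x →
      ((C.a i).left ∈ (C.q m).pts) ∨ ((C.a (C.k - C.x + i)).right ∈ (C.q m).pts) := by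
    intro m i hm1 hm2 hi1 hi2
    by_cases hH : (C.a i).left ∈ (C.q m).pts
    · exact Or.inl hH
    · right
      have hHsub : (Finset.Icc 1 C.k).filter (fun j => (C.a j).left ∈ (C.q m).pts)
          ⊆ Finset.Icc 1 (i - 1) := by
        intro j hj
        obtain ⟨hjI, hjmem⟩ := Finset.mem_filter.1 hj
        rw [Finset.mem_Icc] at hjI
        rw [Finset.mem_Icc]
        refine ⟨hjI.1, ?_⟩
        by_contra hgt
        push_neg at hgt
        exact hH (hHdown m hm1 hm2 j i hi1 (by omega) hjI.2 hjmem)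
      have hHcard := Finset.card_le_card hHsub
      rw [Nat.card_Icc] at hHcard
      have hhf := hHF m hm1 hm2
      by_contra hFi
      have hFsub : (Finset.Icc 1 C.k).filter (fun j => (C.a j).right ∈ (C.q m).pts)
          ⊆ Finset.Icc (C.k - C.x + i + 1) C.k := by
        intro j hj
        obtain ⟨hjI, hjmem⟩ := Finset.mem_filter.1 hj
        rw [Finset.mem_Icc] at hjI
        rw [Finset.mem_Icc]
        refine ⟨?_, hjI.2⟩
        by_contra hlt3
        push_neg at hlt3
        exact hFi (hFup m hm1 hm2 j (C.k - C.x + i) hjI.1 (by omega) (by omega) hjmem)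
      have hFcard := Finset.card_le_card hFsub
      rw [Nat.card_Icc] at hFcard
      omega
  -- ===== auxiliary facts for the minor assembly =====
  have hk1 : 1 ≤ C.k := by omega
  have hA1 := haA 1 (le_refl 1) hk1
  have hidxbound : ∀ i s, 1 ≤ i → i ≤ C.x → s < t → i + s * C.x ≤ C.k := by
    intro i s h1 h2 hs
    have hmul : s * C.x ≤ (t-1) * C.x := Nat.mul_le_mul_right _ (by omega)
    omega
  have hqa_ne : ∀ m n, 1 ≤ m → m ≤ C.r → 1 ≤ n → n ≤ C.k → C.q m ≠ C.a n := by
    intro m n hm1 hm2 hn1 hn2 he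
    exact (haA n hn1 hn2).2 (he ▸ (hqQ m hm1 hm2).2)
  have hmodinj : ∀ i1 i2 s1 s2, 1 ≤ i1 → i1 ≤ C.x → 1 ≤ i2 → i2 ≤ C.x →
      i1 + s1 * C.x = i2 + s2 * C.x → i1 = i2 := by
    intro i1 i2 s1 s2 h1 h2 h3 h4 heq
    have e1 : (i1 + s1 * C.x) % C.x = i1 % C.x := Nat.add_mul_mod_self_right _ _ _
    have e2 : (i2 + s2 * C.x) % C.x = i2 % C.x := Nat.add_mul_mod_self_right _ _ _
    have e3 : i1 % C.x = i2 % C.x := by rw [← e1, ← e2, heq]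
    have f1 : i1 % C.x = if i1 = C.x then 0 else i1 := by
      rcases eq_or_lt_of_le h2 with rfl | hlt
      · simp [Nat.mod_self]
      · rw [if_neg (by omega), Nat.mod_eq_of_lt hlt]
    have f2 : i2 % C.x = if i2 = C.x then 0 else i2 := by
      rcases eq_or_lt_of_le h4 with rfl | hlt
      · simp [Nat.mod_self]
      · rw [if_neg (by omega), Nat.mod_eq_of_lt hlt]
    rw [f1, f2] at e3
    split_ifs at e3 <;> omega
  -- ===== the K_{r+x} minor =====
  have hminor : HasKMinor C.F.graph (C.r + C.x) := by
    refine ⟨fun idx => if h : idx.1 < C.r then {v | v.1 = C.q (idx.1 + 1)}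
        else {v | ∃ s, s < t ∧ v.1 = C.a (idx.1 - C.r + 1 + s * C.x)}, ?_, ?_, ?_⟩
    · -- connectivity
      intro idx
      dsimp only
      by_cases h : idx.1 < C.r
      · rw [dif_pos h]
        exact connected_pred_singleton _ _
          ⟨C.q (idx.1+1), (hqQ (idx.1+1) (by omega) (by omega)).1⟩
          (fun v => by
            constructor
            · intro hv
              exact Subtype.ext hv
            · intro hv
              subst hv
              exact rfl)
      · rw [dif_neg h]
        have hidx2 := idx.2
        have hi1 : 1 ≤ idx.1 - C.r + 1 := by omega
        have hi2 : idx.1 - C.r + 1 ≤ C.x := by omega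
        refine connected_chain _ _ t (by omega)
          (fun s => if hs : s < t then ⟨C.a (idx.1 - C.r + 1 + s * C.x),
            (haA _ (by omega) (hidxbound (idx.1 - C.r + 1) s hi1 hi2 hs)).1⟩
           else ⟨C.a 1, hA1.1⟩) ?_ ?_
        · intro v
          constructor
          · rintro ⟨s, hs, hv⟩
            refine ⟨s, hs, ?_⟩
            rw [dif_pos hs]
            exact Subtype.ext hv
          · rintro ⟨s, hs, hv⟩
            refine ⟨s, hs, ?_⟩
            rw [dif_pos hs] at hv
            rw [hv]
        · intro s hs1
          rw [dif_pos (show s < t by omega), dif_pos hs1]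
          have harith : idx.1 - C.r + 1 + (s+1) * C.x
              = (idx.1 - C.r + 1 + s * C.x) + C.x := by ring
          have hb1 := hidxbound (idx.1 - C.r + 1) s hi1 hi2 (by omega)
          have hb2 := hidxbound (idx.1 - C.r + 1) (s+1) hi1 hi2 hs1
          obtain ⟨pp, hp1, hp2⟩ := hcross (idx.1 - C.r + 1 + s * C.x)
            (idx.1 - C.r + 1 + (s+1) * C.x) (by omega) (by omega) (by omega) (by omega)
          refine ⟨?_, pp, hp1, hp2⟩
          intro hvv
          have hval : C.a (idx.1 - C.r + 1 + s * C.x)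
              = C.a (idx.1 - C.r + 1 + (s+1) * C.x) := congrArg Subtype.val hvv
          have := C.a_inj _ _ (by omega) (by omega) (by omega) hb2 hval
          omega
    · -- disjointness
      intro idx1 idx2 hne12
      rw [Set.disjoint_left]
      intro v hv1 hv2
      dsimp only at hv1 hv2
      by_cases h1 : idx1.1 < C.r <;> by_cases h2 : idx2.1 < C.r
      · rw [dif_pos h1] at hv1
        rw [dif_pos h2] at hv2
        have e1 : v.1 = C.q (idx1.1+1) := hv1
        have e2 : v.1 = C.q (idx2.1+1) := hv2
        have h3 : C.q (idx1.1+1) = C.q (idx2.1+1) := by rw [← e1, ← e2]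
        have := C.q_inj _ _ (by omega) (by omega) (by omega) (by omega) h3
        exact hne12 (Fin.ext (by omega))
      · rw [dif_pos h1] at hv1
        rw [dif_neg h2] at hv2
        obtain ⟨s, hs, hv2'⟩ := hv2
        have hb := hidxbound (idx2.1 - C.r + 1) s (by omega)
          (by have := idx2.2; omega) hs
        exact hqa_ne (idx1.1+1) (idx2.1 - C.r + 1 + s * C.x) (by omega) (by omega)
          (by omega) hb (by
            have e1 : v.1 = C.q (idx1.1+1) := hv1
            rw [← e1, ← hv2'])
      · rw [dif_neg h1] at hv1
        rw [dif_pos h2] at hv2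
        obtain ⟨s, hs, hv1'⟩ := hv1
        have hb := hidxbound (idx1.1 - C.r + 1) s (by omega)
          (by have := idx1.2; omega) hs
        exact hqa_ne (idx2.1+1) (idx1.1 - C.r + 1 + s * C.x) (by omega) (by omega)
          (by omega) hb (by
            have e2 : v.1 = C.q (idx2.1+1) := hv2
            rw [← e2, ← hv1'])
      · rw [dif_neg h1] at hv1
        rw [dif_neg h2] at hv2
        obtain ⟨s1, hs1, e1⟩ := hv1
        obtain ⟨s2, hs2, e2⟩ := hv2
        have hb1 := hidxbound (idx1.1 - C.r + 1) s1 (by omega)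
          (by have := idx1.2; omega) hs1
        have hb2 := hidxbound (idx2.1 - C.r + 1) s2 (by omega)
          (by have := idx2.2; omega) hs2
        have he : C.a (idx1.1 - C.r + 1 + s1 * C.x)
            = C.a (idx2.1 - C.r + 1 + s2 * C.x) := by rw [← e1, ← e2]
        have hidxeq := C.a_inj _ _ (by omega) hb1 (by omega) hb2 he
        have := hmodinj _ _ s1 s2 (by omega) (by have := idx1.2; omega)
          (by omega) (by have := idx2.2; omega) hidxeq
        exact hne12 (Fin.ext (by omega))
    · -- edges
      intro idx1 idx2 hne12
      dsimp only
      by_cases h1 : idx1.1 < C.r <;> by_cases h2 : idx2.1 < C.r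
      · simp only [dif_pos h1, dif_pos h2]
        refine ⟨⟨C.q (idx1.1+1), (hqQ _ (by omega) (by omega)).1⟩, rfl,
                ⟨C.q (idx2.1+1), (hqQ _ (by omega) (by omega)).1⟩, rfl, ?_⟩
        refine ⟨?_, C.p₀, (hqQ _ (by omega) (by omega)).2, (hqQ _ (by omega) (by omega)).2⟩
        intro he
        have hval : C.q (idx1.1+1) = C.q (idx2.1+1) := congrArg Subtype.val he
        have := C.q_inj _ _ (by omega) (by omega) (by omega) (by omega) hval
        exact hne12 (Fin.ext (by omega))
      · simp only [dif_pos h1, dif_neg h2]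
        have hi1 : 1 ≤ idx2.1 - C.r + 1 := by omega
        have hi2 : idx2.1 - C.r + 1 ≤ C.x := by have := idx2.2; omega
        have hm1 : 1 ≤ idx1.1 + 1 := by omega
        have hm2 : idx1.1 + 1 ≤ C.r := by omega
        rcases hqchain (idx1.1+1) (idx2.1 - C.r + 1) hm1 hm2 hi1 hi2 with hmem | hmem
        · refine ⟨⟨C.q (idx1.1+1), (hqQ _ hm1 hm2).1⟩, rfl,
            ⟨C.a (idx2.1 - C.r + 1), (haA _ hi1 (by omega)).1⟩,
            ⟨0, by omega, by show C.a _ = C.a _; congr 1; omega⟩, ?_⟩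
          constructor
          · intro he
            exact hqa_ne (idx1.1+1) (idx2.1 - C.r + 1) hm1 hm2 hi1 (by omega)
              (congrArg Subtype.val he)
          · exact ⟨(C.a (idx2.1 - C.r + 1)).left, hmem, left_mem_pts _⟩
        · refine ⟨⟨C.q (idx1.1+1), (hqQ _ hm1 hm2).1⟩, rfl,
            ⟨C.a (C.k - C.x + (idx2.1 - C.r + 1)), (haA _ (by omega) (by omega)).1⟩,
            ⟨t-1, by omega, ?_⟩, ?_⟩
          · show C.a (C.k - C.x + (idx2.1 - C.r + 1))
              = C.a (idx2.1 - C.r + 1 + (t-1) * C.x)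
            congr 1
            omega
          · constructor
            · intro he
              exact hqa_ne (idx1.1+1) (C.k - C.x + (idx2.1 - C.r + 1)) hm1 hm2
                (by omega) (by omega) (congrArg Subtype.val he)
            · exact ⟨(C.a (C.k - C.x + (idx2.1 - C.r + 1))).right, hmem, right_mem_pts _⟩
      · simp only [dif_neg h1, dif_pos h2]
        have hi1 : 1 ≤ idx1.1 - C.r + 1 := by omega
        have hi2 : idx1.1 - C.r + 1 ≤ C.x := by have := idx1.2; omega
        have hm1 : 1 ≤ idx2.1 + 1 := by omega
        have hm2 : idx2.1 + 1 ≤ C.r := by omega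
        rcases hqchain (idx2.1+1) (idx1.1 - C.r + 1) hm1 hm2 hi1 hi2 with hmem | hmem
        · refine ⟨⟨C.a (idx1.1 - C.r + 1), (haA _ hi1 (by omega)).1⟩,
            ⟨0, by omega, by show C.a _ = C.a _; congr 1; omega⟩,
            ⟨C.q (idx2.1+1), (hqQ _ hm1 hm2).1⟩, rfl, ?_⟩
          constructor
          · intro he
            exact hqa_ne (idx2.1+1) (idx1.1 - C.r + 1) hm1 hm2 hi1 (by omega)
              (congrArg Subtype.val he).symm
          · exact ⟨(C.a (idx1.1 - C.r + 1)).left, left_mem_pts _, hmem⟩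
        · refine ⟨⟨C.a (C.k - C.x + (idx1.1 - C.r + 1)), (haA _ (by omega) (by omega)).1⟩,
            ⟨t-1, by omega, ?_⟩,
            ⟨C.q (idx2.1+1), (hqQ _ hm1 hm2).1⟩, rfl, ?_⟩
          · show C.a (C.k - C.x + (idx1.1 - C.r + 1))
              = C.a (idx1.1 - C.r + 1 + (t-1) * C.x)
            congr 1
            omega
          · constructor
            · intro he
              exact hqa_ne (idx2.1+1) (C.k - C.x + (idx1.1 - C.r + 1)) hm1 hm2
                (by omega) (by omega) (congrArg Subtype.val he).symm
            · exact ⟨(C.a (C.k - C.x + (idx1.1 - C.r + 1))).right, right_mem_pts _, hmem⟩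
      · simp only [dif_neg h1, dif_neg h2]
        have hi1a : 1 ≤ idx1.1 - C.r + 1 := by omega
        have hi1b : idx1.1 - C.r + 1 ≤ C.x := by have := idx1.2; omega
        have hi2a : 1 ≤ idx2.1 - C.r + 1 := by omega
        have hi2b : idx2.1 - C.r + 1 ≤ C.x := by have := idx2.2; omega
        have hine : idx1.1 - C.r + 1 ≠ idx2.1 - C.r + 1 := by
          intro he
          exact hne12 (Fin.ext (by omega))
        have hmain : ∀ pp : AddCircle (1:ℝ), pp ∈ (C.a (idx1.1 - C.r + 1)).pts →
            pp ∈ (C.a (idx2.1 - C.r + 1)).pts →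
            (∃ u ∈ {v : {w : CArc // w ∈ C.F.arcs} | ∃ s, s < t ∧
                v.1 = C.a (idx1.1 - C.r + 1 + s * C.x)},
             ∃ v ∈ {v : {w : CArc // w ∈ C.F.arcs} | ∃ s, s < t ∧
                v.1 = C.a (idx2.1 - C.r + 1 + s * C.x)}, C.F.graph.Adj u v) := by
          intro pp hp1 hp2
          refine ⟨⟨C.a (idx1.1 - C.r + 1), (haA _ hi1a (by omega)).1⟩,
            ⟨0, by omega, by show C.a _ = C.a _; congr 1; omega⟩,
            ⟨C.a (idx2.1 - C.r + 1), (haA _ hi2a (by omega)).1⟩,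
            ⟨0, by omega, by show C.a _ = C.a _; congr 1; omega⟩, ?_⟩
          constructor
          · intro he
            have hval : C.a (idx1.1 - C.r + 1) = C.a (idx2.1 - C.r + 1) :=
              congrArg Subtype.val he
            exact hine (C.a_inj _ _ hi1a (by omega) hi2a (by omega) hval)
          · exact ⟨pp, hp1, hp2⟩
        rcases lt_or_gt_of_ne hine with hlt | hgt
        · obtain ⟨pp, hp1, hp2⟩ := hcross (idx1.1 - C.r + 1) (idx2.1 - C.r + 1)
            hi1a hlt (by omega) (by omega)
          exact hmain pp hp1 hp2
        · obtain ⟨pp, hp1, hp2⟩ := hcross (idx2.1 - C.r + 1) (idx1.1 - C.r + 1)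
            hi2a hgt (by omega) (by omega)
          exact hmain pp hp2 hp1
  exact C.no_clique_minor _ C.hx hminor
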